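/- In a 2n-step simple symmetric random walk, the probability that the walk spends exactly 2k time units on the positive side equals C(2k,k)·C(2n-2k, n-k)/4^n (the discrete arcsine law). -/

import Mathlib

/-- Partial sum of the walk after the first `j` steps. -/
def S (n : ℕ) (ω : Fin n → Bool) (j : ℕ) : ℤ :=
  ∑ i : Fin n, if (i : ℕ) < j then (if ω i then (1 : ℤ) else -1) else 0

/-- Number of time units `(j-1, j)`, `1 ≤ j ≤ n`, spent on the positive side. -/
def posTime (n : ℕ) (ω : Fin n → Bool) : ℕ :=
  ((Finset.Icc 1 n).filter fun j => 0 < S n ω (j - 1) ∨ 0 < S n ω j).card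

attribute [local instance 0] Classical.propDecidable

lemma card_filter_ext {α : Type*} [Fintype α] {p q : α → Prop}
    {h1 : DecidablePred p} {h2 : DecidablePred q} (h : ∀ a, p a ↔ q a) :
    (@Finset.filter α p h1 Finset.univ).card = (@Finset.filter α q h2 Finset.univ).card := by
  have hpq : p = q := funext fun a => propext (h a)
  subst hpq
  rw [Subsingleton.elim h1 h2]

/-- step function extended by zero -/
def stepc (n : ℕ) (ω : Fin n → Bool) (i : ℕ) : ℤ :=
  if h : i < n then (if ω ⟨i, h⟩ then (1 : ℤ) else -1) else 0

lemma S_eq (n : ℕ) (ω : Fin n → Bool) (j : ℕ) :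
    S n ω j = ∑ i ∈ Finset.range j, stepc n ω i := by
  have h1 : S n ω j = ∑ i ∈ Finset.range n, (if i < j then stepc n ω i else 0) := by
    rw [S, ← Fin.sum_univ_eq_sum_range (fun i => if i < j then stepc n ω i else 0) n]
    exact Finset.sum_congr rfl fun i _ => by simp [stepc, i.isLt]
  have h2 : ∑ i ∈ Finset.range j, stepc n ω i
      = ∑ i ∈ Finset.range j, (if i < j then stepc n ω i else 0) :=
    Finset.sum_congr rfl fun i hi => by simp [Finset.mem_range.mp hi]
  rw [h1, h2]
  have e1 : Finset.range n ⊆ Finset.range (max j n) := by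
    apply Finset.range_subset_range.2; omega
  have e2 : Finset.range j ⊆ Finset.range (max j n) := by
    apply Finset.range_subset_range.2; omega
  rw [Finset.sum_subset e1, Finset.sum_subset e2]
  · intro i _ hi
    simp only [Finset.mem_range, not_lt] at hi
    simp [hi.not_gt]
  · intro i _ hi
    simp only [Finset.mem_range, not_lt] at hi
    rcases lt_or_ge i j with h' | h'
    · rw [if_pos h', stepc, dif_neg (by omega)]
    · rw [if_neg (by omega)]

lemma S_zero (n : ℕ) (ω : Fin n → Bool) : S n ω 0 = 0 := by
  simp [S_eq]

lemma S_succ (n : ℕ) (ω : Fin n → Bool) (j : ℕ) :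
    S n ω (j + 1) = S n ω j + stepc n ω j := by
  simp [S_eq, Finset.sum_range_succ]

lemma stepc_abs {n : ℕ} {ω : Fin n → Bool} {i : ℕ} (h : i < n) :
    stepc n ω i = 1 ∨ stepc n ω i = -1 := by
  unfold stepc; rw [dif_pos h]; rcases ω ⟨i, h⟩ <;> simp

lemma S_parity (n : ℕ) (ω : Fin n → Bool) (j : ℕ) (hj : j ≤ n) :
    Even (S n ω j + j) := by
  induction j with
  | zero => simp [S_zero]
  | succ j ih =>
    have h := ih (by omega)
    rcases h with ⟨t, ht⟩
    rcases stepc_abs (ω := ω) (show j < n by omega) with h1 | h1 <;>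
      rw [S_succ, h1] <;> push_cast
    · exact ⟨t + 1, by linarith⟩
    · exact ⟨t, by linarith⟩

lemma S_of_ge {n j : ℕ} (ω : Fin n → Bool) (h : n ≤ j) : S n ω j = S n ω n := by
  rw [S_eq, S_eq, ← Finset.sum_subset (Finset.range_subset_range.2 h)]
  intro i _ hi
  simp only [Finset.mem_range, not_lt] at hi
  rw [stepc, dif_neg (by omega : ¬ i < n)]

lemma stepc_append_lt {a b : ℕ} (e : Fin a → Bool) (w : Fin b → Bool) {i : ℕ} (h : i < a) :
    stepc (a + b) (Fin.append e w) i = stepc a e i := by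
  have h2 : i < a + b := by omega
  rw [stepc, stepc, dif_pos h, dif_pos h2]
  have : (⟨i, h2⟩ : Fin (a + b)) = Fin.castAdd b ⟨i, h⟩ := rfl
  rw [this, Fin.append_left]

lemma stepc_append_ge {a b : ℕ} (e : Fin a → Bool) (w : Fin b → Bool) {i : ℕ} (h : a ≤ i) :
    stepc (a + b) (Fin.append e w) i = stepc b w (i - a) := by
  rcases lt_or_ge i (a + b) with h2 | h2
  · have h3 : i - a < b := by omega
    rw [stepc, stepc, dif_pos h2, dif_pos h3]
    have : (⟨i, h2⟩ : Fin (a + b)) = Fin.natAdd a ⟨i - a, h3⟩ := by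
      simp [Fin.natAdd, Fin.ext_iff]; omega
    rw [this, Fin.append_right]
  · rw [stepc, stepc, dif_neg (by omega), dif_neg (by omega)]

lemma S_append_le {a b : ℕ} (e : Fin a → Bool) (w : Fin b → Bool) {j : ℕ} (h : j ≤ a) :
    S (a + b) (Fin.append e w) j = S a e j := by
  rw [S_eq, S_eq]
  exact Finset.sum_congr rfl fun i hi =>
    stepc_append_lt e w (by have := Finset.mem_range.mp hi; omega)

lemma S_append_ge {a b : ℕ} (e : Fin a → Bool) (w : Fin b → Bool) {j : ℕ} (h : a ≤ j) :
    S (a + b) (Fin.append e w) j = S a e a + S b w (j - a) := by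
  rw [S_eq, S_eq, S_eq, show j = a + (j - a) by omega, Finset.sum_range_add]
  congr 1
  · exact Finset.sum_congr rfl fun i hi =>
      stepc_append_lt e w (Finset.mem_range.mp hi)
  · refine Finset.sum_congr (by congr 1; omega) fun i _ => ?_
    rw [stepc_append_ge e w (by omega)]
    congr 1
    omega

def splitEquiv (a b : ℕ) : (Fin (a + b) → Bool) ≃ (Fin a → Bool) × (Fin b → Bool) where
  toFun ω := (fun i => ω (Fin.castAdd b i), fun i => ω (Fin.natAdd a i))
  invFun p := Fin.append p.1 p.2
  left_inv ω := by
    funext i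
    refine Fin.addCases (fun j => ?_) (fun j => ?_) i <;>
      simp [Fin.append_left, Fin.append_right]
  right_inv p := by
    ext i <;> simp [Fin.append_left, Fin.append_right]

lemma card_filter_split {a b : ℕ} (P : (Fin (a + b) → Bool) → Prop)
    (P1 : (Fin a → Bool) → Prop) (P2 : (Fin b → Bool) → Prop)
    [DecidablePred P] [DecidablePred P1] [DecidablePred P2]
    (h : ∀ e w, P (Fin.append e w) ↔ P1 e ∧ P2 w) :
    (Finset.univ.filter P).card
      = (Finset.univ.filter P1).card * (Finset.univ.filter P2).card := by
  classical
  rw [← Finset.card_product, ← Finset.filter_product]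
  rw [show (Finset.univ ×ˢ Finset.univ : Finset ((Fin a → Bool) × (Fin b → Bool))) = Finset.univ
    from Finset.univ_product_univ]
  apply Finset.card_equiv (splitEquiv a b)
  intro ω
  simp only [Finset.mem_filter, Finset.mem_univ, true_and, Finset.mem_product]
  constructor
  · intro hP
    have := (h (fun i => ω (Fin.castAdd b i)) (fun i => ω (Fin.natAdd a i))).mp
    have heq : Fin.append (fun i => ω (Fin.castAdd b i)) (fun i => ω (Fin.natAdd a i)) = ω :=
      (splitEquiv a b).left_inv ω
    rw [heq] at this
    exact this hP
  · intro hP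
    have heq : Fin.append (fun i => ω (Fin.castAdd b i)) (fun i => ω (Fin.natAdd a i)) = ω :=
      (splitEquiv a b).left_inv ω
    rw [← heq]
    exact (h _ _).mpr hP

lemma stepc_cast {c d : ℕ} (h : c = d) (ω : Fin c → Bool) (i : ℕ) :
    stepc d (fun i => ω (Fin.cast h.symm i)) i = stepc c ω i := by
  subst h; rfl

lemma S_cast {c d : ℕ} (h : c = d) (ω : Fin c → Bool) (j : ℕ) :
    S d (fun i => ω (Fin.cast h.symm i)) j = S c ω j := by
  subst h; rfl

lemma card_filter_cast {c d : ℕ} (h : c = d) (P : (Fin c → Bool) → Prop)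
    (Q : (Fin d → Bool) → Prop) [DecidablePred P] [DecidablePred Q]
    (hPQ : ∀ ω : Fin c → Bool, P ω ↔ Q (fun i => ω (Fin.cast h.symm i))) :
    (Finset.univ.filter P).card = (Finset.univ.filter Q).card := by
  subst h
  apply congrArg Finset.card
  apply Finset.filter_congr
  intro ω _
  exact hPQ ω

lemma S_succ_cases {n : ℕ} (ω : Fin n → Bool) {j : ℕ} (h : j < n) :
    S n ω (j + 1) = S n ω j + 1 ∨ S n ω (j + 1) = S n ω j - 1 := by
  rcases stepc_abs (ω := ω) h with h1 | h1 <;> rw [S_succ, h1] <;> [left; right] <;> ring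

lemma S_neg (n : ℕ) (ω : Fin n → Bool) (j : ℕ) :
    S n (fun i => !(ω i)) j = - S n ω j := by
  rw [S_eq, S_eq, ← Finset.sum_neg_distrib]
  apply Finset.sum_congr rfl
  intro i _
  unfold stepc
  rcases lt_or_ge i n with h | h
  · rw [dif_pos h, dif_pos h]
    cases hb : ω ⟨i, h⟩ <;> simp [hb]
  · rw [dif_neg (by omega), dif_neg (by omega)]; ring

lemma posTime_le (n : ℕ) (ω : Fin n → Bool) : posTime n ω ≤ n := by
  calc posTime n ω ≤ (Finset.Icc 1 n).card := Finset.card_filter_le _ _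
  _ = n := by rw [Nat.card_Icc]; omega

lemma posTime_neg (n : ℕ) (ω : Fin n → Bool) :
    posTime n (fun i => !(ω i)) = n - posTime n ω := by
  have key : ∀ j ∈ Finset.Icc 1 n,
      ((0 < S n (fun i => !(ω i)) (j - 1) ∨ 0 < S n (fun i => !(ω i)) j)
        ↔ ¬ (0 < S n ω (j - 1) ∨ 0 < S n ω j)) := by
    intro j hj
    rw [Finset.mem_Icc] at hj
    have hd : S n ω j = S n ω (j - 1) + 1 ∨ S n ω j = S n ω (j - 1) - 1 := by
      have := S_succ_cases ω (show j - 1 < n by omega)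
      rw [show j - 1 + 1 = j by omega] at this
      exact this
    rw [S_neg, S_neg]
    constructor
    · intro hcase
      push_neg
      constructor <;> omega
    · intro hcase
      push_neg at hcase
      omega
  rw [posTime, Finset.filter_congr key, Finset.filter_not, Finset.card_sdiff_of_subset
    (Finset.filter_subset _ _)]
  rw [Nat.card_Icc, posTime]
  omega

lemma posTime_zero_iff (n : ℕ) (ω : Fin n → Bool) :
    posTime n ω = 0 ↔ ∀ j, j ≤ n → S n ω j ≤ 0 := by
  rw [posTime, Finset.card_eq_zero, Finset.filter_eq_empty_iff]
  constructor
  · intro h j hj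
    rcases Nat.eq_zero_or_pos j with rfl | hpos
    · rw [S_zero]
    · have := h (Finset.mem_Icc.mpr ⟨hpos, hj⟩)
      push_neg at this
      exact this.2
  · intro h j hj
    rw [Finset.mem_Icc] at hj
    push_neg
    exact ⟨h _ (by omega), h _ (by omega)⟩

lemma neg_persist {n L : ℕ} (ω : Fin n → Bool) (hL : L ≤ n)
    (h1 : S n ω 1 < 0) (hz : ∀ i, 0 < i → i < L → S n ω i ≠ 0) :
    ∀ j, 0 < j → j ≤ L → (S n ω j ≤ 0 ∧ (j < L → S n ω j < 0)) := by
  intro j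
  induction j with
  | zero => omega
  | succ j ih =>
    intro _ hjL
    rcases Nat.eq_zero_or_pos j with rfl | hj
    · have h1' : S n ω (0 + 1) < 0 := by simpa using h1
      exact ⟨h1'.le, fun _ => h1'⟩
    · have prev := ih hj (by omega)
      have hlt : S n ω j < 0 := prev.2 (by omega)
      have hd := S_succ_cases ω (show j < n by omega)
      constructor
      · omega
      · intro hL2
        have := hz (j + 1) (by omega) hL2
        omega

lemma pos_persist {n L : ℕ} (ω : Fin n → Bool) (hL : L ≤ n)
    (h1 : 0 < S n ω 1) (hz : ∀ i, 0 < i → i < L → S n ω i ≠ 0) :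
    ∀ j, 0 < j → j ≤ L → (0 ≤ S n ω j ∧ (j < L → 0 < S n ω j)) := by
  intro j hj hjL
  have := neg_persist (fun i => !(ω i)) hL (by rw [S_neg]; omega)
    (fun i hi hiL => by rw [S_neg]; have := hz i hi hiL; omega) j hj hjL
  rw [S_neg] at this
  constructor
  · omega
  · intro h
    have := this.2 h
    omega

lemma posTime_append {a b : ℕ} (e : Fin a → Bool) (w : Fin b → Bool)
    (h0 : S a e a = 0) :
    posTime (a + b) (Fin.append e w) = posTime a e + posTime b w := by
  rw [posTime]
  have hsplit : Finset.Icc 1 (a + b) = Finset.Icc 1 a ∪ Finset.Icc (a + 1) (a + b) := by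
    ext j; simp only [Finset.mem_Icc, Finset.mem_union]; omega
  rw [hsplit, Finset.filter_union, Finset.card_union_of_disjoint]
  · congr 1
    · rw [posTime]
      apply congrArg Finset.card
      apply Finset.filter_congr
      intro j hj
      rw [Finset.mem_Icc] at hj
      rw [S_append_le e w (show j - 1 ≤ a by omega), S_append_le e w (show j ≤ a by omega)]
    · rw [posTime]
      apply Finset.card_bij' (fun j _ => j - a) (fun j _ => j + a)
      · intro j hj
        rw [Finset.mem_filter, Finset.mem_Icc] at hj
        rw [Finset.mem_filter, Finset.mem_Icc]
        obtain ⟨⟨hj1, hj2⟩, hj3⟩ := hj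
        refine ⟨⟨by omega, by omega⟩, ?_⟩
        rw [S_append_ge e w (show a ≤ j - 1 by omega), S_append_ge e w (show a ≤ j by omega),
          h0] at hj3
        rw [show j - 1 - a = j - a - 1 by omega] at hj3
        simpa using hj3
      · intro j hj
        rw [Finset.mem_filter, Finset.mem_Icc] at hj
        rw [Finset.mem_filter, Finset.mem_Icc]
        obtain ⟨⟨hj1, hj2⟩, hj3⟩ := hj
        refine ⟨⟨by omega, by omega⟩, ?_⟩
        rw [S_append_ge e w (show a ≤ j + a - 1 by omega), S_append_ge e w (show a ≤ j + a by omega),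
          h0]
        rw [show j + a - 1 - a = j - 1 by omega, show j + a - a = j by omega]
        simpa using hj3
      · intro j hj
        rw [Finset.mem_filter, Finset.mem_Icc] at hj
        omega
      · intro j hj
        rw [Finset.mem_filter, Finset.mem_Icc] at hj
        omega
  · rw [Finset.disjoint_left]
    intro j hj1 hj2
    rw [Finset.mem_filter, Finset.mem_Icc] at hj1 hj2
    omega

noncomputable def fz (n : ℕ) (ω : Fin n → Bool) : ℕ :=
  sInf {j | 0 < j ∧ S n ω j = 0}

/-- first-return path predicate -/
def FR (L : ℕ) (e : Fin L → Bool) : Prop :=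
  S L e L = 0 ∧ ∀ j, j < L → 0 < j → S L e j ≠ 0

lemma fz_eq_iff {n r : ℕ} (ω : Fin n → Bool) (hr : 0 < r) :
    fz n ω = r ↔ (S n ω r = 0 ∧ ∀ j, j < r → 0 < j → S n ω j ≠ 0) := by
  constructor
  · intro h
    have hne : {j | 0 < j ∧ S n ω j = 0}.Nonempty := by
      by_contra hne
      rw [Set.not_nonempty_iff_eq_empty] at hne
      rw [fz, hne, Nat.sInf_empty] at h
      omega
    have hmem := Nat.sInf_mem hne
    rw [← fz, h] at hmem
    refine ⟨hmem.2, fun j hj hj0 hS => ?_⟩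
    have := Nat.sInf_le (show j ∈ {j | 0 < j ∧ S n ω j = 0} from ⟨hj0, hS⟩)
    rw [← fz, h] at this
    omega
  · rintro ⟨h0, hmin⟩
    apply le_antisymm
    · exact Nat.sInf_le ⟨hr, h0⟩
    · by_contra hlt
      push_neg at hlt
      have hne : {j | 0 < j ∧ S n ω j = 0}.Nonempty := ⟨r, hr, h0⟩
      have hmem := Nat.sInf_mem hne
      rw [← fz] at hmem
      exact hmin _ hlt hmem.1 hmem.2

lemma fz_mem {n : ℕ} (ω : Fin n → Bool) {j₀ : ℕ} (h0 : 0 < j₀) (hS : S n ω j₀ = 0) :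
    0 < fz n ω ∧ fz n ω ≤ j₀ ∧ S n ω (fz n ω) = 0 := by
  have hne : {j | 0 < j ∧ S n ω j = 0}.Nonempty := ⟨j₀, h0, hS⟩
  have hmem := Nat.sInf_mem hne
  have hle := Nat.sInf_le (show j₀ ∈ {j | 0 < j ∧ S n ω j = 0} from ⟨h0, hS⟩)
  exact ⟨hmem.1, hle, hmem.2⟩

lemma card_filter_fz (m : ℕ) (Q : (Fin (2 * m) → Bool) → Prop)
    [DecidablePred Q] [∀ r : ℕ, DecidablePred fun ω => Q ω ∧ fz (2 * m) ω = 2 * r]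
    (hret : ∀ ω, Q ω → ∃ j, 0 < j ∧ j ≤ 2 * m ∧ S (2 * m) ω j = 0) :
    (Finset.univ.filter Q).card
      = ∑ r ∈ Finset.Icc 1 m,
          (Finset.univ.filter fun ω => Q ω ∧ fz (2 * m) ω = 2 * r).card := by
  classical
  have key : ∀ ω : Fin (2 * m) → Bool, Q ω →
      (0 < fz (2 * m) ω ∧ fz (2 * m) ω ≤ 2 * m ∧ fz (2 * m) ω % 2 = 0) := by
    intro ω hQ
    obtain ⟨j₀, hj1, hj2, hj3⟩ := hret ω hQ
    obtain ⟨h1, h2, h3⟩ := fz_mem ω hj1 hj3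
    refine ⟨h1, by omega, ?_⟩
    have hp := S_parity (2 * m) ω (fz (2 * m) ω) (by omega)
    rw [h3] at hp
    have hev : Even (fz (2 * m) ω) := by
      have : Even ((fz (2 * m) ω : ℤ)) := by simpa using hp
      exact_mod_cast this
    exact Nat.even_iff.mp hev
  rw [Finset.card_eq_sum_card_fiberwise
    (f := fun ω => fz (2 * m) ω / 2) (t := Finset.Icc 1 m) ?_]
  · apply Finset.sum_congr rfl
    intro r _
    rw [Finset.filter_filter]
    apply congrArg Finset.card
    apply Finset.filter_congr
    intro ω _
    constructor
    · rintro ⟨hQ, hf⟩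
      obtain ⟨h1, h2, h3⟩ := key ω hQ
      exact ⟨hQ, by omega⟩
    · rintro ⟨hQ, hf⟩
      exact ⟨hQ, by omega⟩
  · intro ω hω
    rw [Finset.mem_coe, Finset.mem_filter] at hω
    obtain ⟨h1, h2, h3⟩ := key ω hω.2
    have hgl : 1 ≤ fz (2 * m) ω / 2 ∧ fz (2 * m) ω / 2 ≤ m := by omega
    simpa [Finset.mem_Icc] using hgl

lemma fz_append {a b : ℕ} (e : Fin a → Bool) (w : Fin b → Bool) (ha : 0 < a) :
    fz (a + b) (Fin.append e w) = a ↔ FR a e := by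
  rw [fz_eq_iff _ ha, FR, S_append_le e w le_rfl]
  constructor
  · rintro ⟨h0, hmin⟩
    exact ⟨h0, fun j hj hj0 => by
      rw [← S_append_le e w (le_of_lt hj)]; exact hmin j hj hj0⟩
  · rintro ⟨h0, hmin⟩
    exact ⟨h0, fun j hj hj0 => by
      rw [S_append_le e w (le_of_lt hj)]; exact hmin j hj hj0⟩

lemma S_cast' {c d : ℕ} (h : c = d) (ν : Fin d → Bool) (j : ℕ) :
    S c (fun i => ν (Fin.cast h i)) j = S d ν j := by
  subst h; rfl

lemma posTime_cast' {c d : ℕ} (h : c = d) (ν : Fin d → Bool) :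
    posTime c (fun i => ν (Fin.cast h i)) = posTime d ν := by
  subst h; rfl

lemma fz_cast' {c d : ℕ} (h : c = d) (ν : Fin d → Bool) :
    fz c (fun i => ν (Fin.cast h i)) = fz d ν := by
  subst h; rfl


lemma card_fiber_split {m r : ℕ} (hr1 : 1 ≤ r) (hrm : r ≤ m)
    (Q : (Fin (2 * m) → Bool) → Prop)
    (P1 : (Fin (2 * r) → Bool) → Prop)
    (Q2 : (Fin (2 * (m - r)) → Bool) → Prop)
    [DecidablePred Q] [DecidablePred P1] [DecidablePred Q2]
    [DecidablePred fun ω => Q ω ∧ fz (2 * m) ω = 2 * r]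
    [DecidablePred fun e => FR (2 * r) e ∧ P1 e]
    (hsplit : ∀ (e : Fin (2 * r) → Bool) (w : Fin (2 * (m - r)) → Bool), FR (2 * r) e →
      (Q (fun i => Fin.append e w (Fin.cast (show 2 * m = 2 * r + 2 * (m - r) by omega) i))
        ↔ P1 e ∧ Q2 w)) :
    (Finset.univ.filter fun ω => Q ω ∧ fz (2 * m) ω = 2 * r).card
      = (Finset.univ.filter fun e => FR (2 * r) e ∧ P1 e).card
        * (Finset.univ.filter Q2).card := by
  have h : 2 * m = 2 * r + 2 * (m - r) := by omega
  rw [card_filter_cast h _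
    (fun ν => Q (fun i => ν (Fin.cast h i)) ∧ fz (2 * r + 2 * (m - r)) ν = 2 * r) ?_]
  · apply card_filter_split
    intro e w
    constructor
    · rintro ⟨hQ, hfz⟩
      have hFR : FR (2 * r) e := (fz_append e w (by omega)).mp hfz
      exact ⟨⟨hFR, ((hsplit e w hFR).mp hQ).1⟩, ((hsplit e w hFR).mp hQ).2⟩
    · rintro ⟨⟨hFR, hP1⟩, hQ2⟩
      exact ⟨(hsplit e w hFR).mpr ⟨hP1, hQ2⟩, (fz_append e w (by omega)).mpr hFR⟩
  · intro ω
    constructor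
    · rintro ⟨hQ, hfz⟩
      refine ⟨hQ, ?_⟩
      rw [← fz_cast' h]
      exact hfz
    · rintro ⟨hQ, hfz⟩
      refine ⟨hQ, ?_⟩
      rw [← fz_cast' h] at hfz
      exact hfz

noncomputable def fcount (r : ℕ) : ℕ :=
  (Finset.univ.filter fun e : Fin (2 * r) → Bool =>
    FR (2 * r) e ∧ 0 < S (2 * r) e 1).card

lemma S_one {n : ℕ} (ω : Fin n → Bool) (hn : 0 < n) :
    S n ω 1 = 1 ∨ S n ω 1 = -1 := by
  have := S_succ n ω 0
  rw [S_zero] at this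
  rcases stepc_abs (ω := ω) hn with h | h <;> rw [show (1:ℕ) = 0 + 1 from rfl, this, h] <;> simp

lemma FR_neg_flip {L : ℕ} (e : Fin L → Bool) :
    FR L (fun i => !(e i)) ↔ FR L e := by
  unfold FR
  constructor
  · rintro ⟨h0, hmin⟩
    rw [S_neg] at h0
    refine ⟨by omega, fun j hj hj0 => ?_⟩
    have := hmin j hj hj0
    rw [S_neg] at this
    omega
  · rintro ⟨h0, hmin⟩
    rw [S_neg]
    refine ⟨by omega, fun j hj hj0 => ?_⟩
    rw [S_neg]
    have := hmin j hj hj0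
    omega

lemma card_FRneg (r : ℕ) :
    (Finset.univ.filter fun e : Fin (2 * r) → Bool =>
        FR (2 * r) e ∧ S (2 * r) e 1 < 0).card = fcount r := by
  rw [fcount]
  apply Finset.card_nbij (fun e => fun i => !(e i))
  · intro e he
    rw [Finset.mem_coe, Finset.mem_filter] at he ⊢
    refine ⟨Finset.mem_univ _, (FR_neg_flip e).mpr he.2.1, ?_⟩
    rw [S_neg]
    have := he.2.2
    omega
  · intro e _ e' _ hee
    funext i
    have := congrFun hee i
    simpa using this
  · intro e' he'
    rw [Finset.mem_coe, Finset.mem_filter] at he'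
    refine ⟨fun i => !(e' i), ?_, ?_⟩
    · rw [Finset.mem_coe, Finset.mem_filter]
      refine ⟨Finset.mem_univ _, ?_, ?_⟩
      · exact (FR_neg_flip _).mpr he'.2.1
      · rw [S_neg]
        have := he'.2.2
        omega
    · funext i; simp

lemma card_FR (r : ℕ) (hr : 0 < r) :
    (Finset.univ.filter fun e : Fin (2 * r) → Bool => FR (2 * r) e).card
      = 2 * fcount r := by
  have hU : (Finset.univ.filter fun e : Fin (2 * r) → Bool => FR (2 * r) e)
      = (Finset.univ.filter fun e : Fin (2 * r) → Bool => FR (2 * r) e ∧ 0 < S (2 * r) e 1)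
        ∪ (Finset.univ.filter fun e : Fin (2 * r) → Bool => FR (2 * r) e ∧ S (2 * r) e 1 < 0) := by
    rw [← Finset.filter_or]
    apply Finset.filter_congr
    intro e _
    constructor
    · intro hFR
      rcases S_one e (by omega) with h | h
      · exact Or.inl ⟨hFR, by omega⟩
      · exact Or.inr ⟨hFR, by omega⟩
    · rintro (⟨h, _⟩ | ⟨h, _⟩) <;> exact h
  rw [hU, Finset.card_union_of_disjoint]
  · rw [card_FRneg r, fcount]
    omega
  · rw [Finset.disjoint_left]
    intro e he1 he2
    rw [Finset.mem_filter] at he1 he2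
    have := he1.2.2
    have := he2.2.2
    omega

lemma posTime_FR_pos {L : ℕ} {e : Fin L → Bool} (h : FR L e) (hp : 0 < S L e 1) :
    posTime L e = L := by
  have hL : 0 < L := by
    rcases Nat.eq_zero_or_pos L with h0 | h0
    · exfalso
      rw [S_of_ge e (by omega), show S L e L = 0 from h.1] at hp
      omega
    · exact h0
  have hper := pos_persist e le_rfl hp (fun i hi hiL => h.2 i hiL hi)
  rw [posTime]
  rw [Finset.filter_true_of_mem, Nat.card_Icc]
  · omega
  · intro j hj
    rw [Finset.mem_Icc] at hj
    rcases Nat.lt_or_ge 1 j with h1 | h1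
    · left
      have hj1L : j - 1 < L := by omega
      exact (hper (j - 1) (by omega) (by omega)).2 hj1L
    · right
      have : j = 1 := by omega
      subst this
      exact hp

lemma posTime_FR_neg {L : ℕ} {e : Fin L → Bool} (h : FR L e) (hp : S L e 1 < 0) :
    posTime L e = 0 := by
  rw [posTime_zero_iff]
  intro j hj
  rcases Nat.eq_zero_or_pos j with rfl | hj0
  · rw [S_zero]
  rcases Nat.lt_or_ge j L with hjL | hjL
  · exact (neg_persist e le_rfl hp (fun i hi hiL => h.2 i hiL hi) j hj0 (by omega)).1
  · have : j = L := by omega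
    subst this
    rw [h.1]

noncomputable def bcount (m : ℕ) : ℕ :=
  (Finset.univ.filter fun ω : Fin (2 * m) → Bool => S (2 * m) ω (2 * m) = 0).card

noncomputable def npcount (L : ℕ) : ℕ :=
  (Finset.univ.filter fun ω : Fin L → Bool => ∀ j, j ≤ L → S L ω j ≤ 0).card

noncomputable def acount (m k : ℕ) : ℕ :=
  (Finset.univ.filter fun ω : Fin (2 * m) → Bool => posTime (2 * m) ω = 2 * k).card

lemma S_total (n : ℕ) (ω : Fin n → Bool) :
    S n ω n = 2 * ((Finset.univ.filter fun i => ω i = true).card : ℤ) - n := by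
  have h1 : S n ω n = ∑ i : Fin n, (if ω i then (1 : ℤ) else -1) := by
    rw [S]
    exact Finset.sum_congr rfl fun i _ => by rw [if_pos i.isLt]
  have h2 : ∀ i : Fin n, (if ω i then (1 : ℤ) else -1)
      = (if ω i = true then (2 : ℤ) else 0) - 1 := by
    intro i; cases hω : ω i <;> simp [hω]
  rw [h1, Finset.sum_congr rfl fun i _ => h2 i, Finset.sum_sub_distrib]
  rw [Finset.sum_ite, Finset.sum_const, Finset.sum_const]
  simp [mul_comm]

lemma bcount_eq (m : ℕ) : bcount m = (2 * m).choose m := by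
  rw [bcount]
  have key : ∀ ω : Fin (2 * m) → Bool,
      (S (2 * m) ω (2 * m) = 0 ↔ (Finset.univ.filter fun i => ω i = true).card = m) := by
    intro ω
    rw [S_total]
    constructor
    · intro h
      have : ((Finset.univ.filter fun i => ω i = true).card : ℤ) = m := by push_cast at h ⊢; omega
      exact_mod_cast this
    · intro h
      rw [h]
      push_cast
      ring
  rw [Finset.filter_congr fun ω _ => key ω]
  have : ((Finset.univ : Finset (Fin (2 * m))).powersetCard m).card = (2 * m).choose m := by
    rw [Finset.card_powersetCard]
    simp
  rw [← this]
  apply Finset.card_nbij (fun ω => Finset.univ.filter fun i => ω i = true)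
  · intro ω hω
    rw [Finset.mem_coe, Finset.mem_filter] at hω
    rw [Finset.mem_coe, Finset.mem_powersetCard]
    exact ⟨Finset.filter_subset _ _ |>.trans (by simp), hω.2⟩
  · intro ω _ ω' _ h
    funext i
    have h1 := Finset.ext_iff.mp h i
    simp only [Finset.mem_filter, Finset.mem_univ, true_and] at h1
    cases hb : ω i <;> cases hb' : ω' i <;> simp [hb, hb'] at h1 ⊢ <;> tauto
  · intro s hs
    rw [Finset.mem_coe, Finset.mem_powersetCard] at hs
    refine ⟨fun i => i ∈ s, ?_, ?_⟩
    · rw [Finset.mem_coe, Finset.mem_filter]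
      refine ⟨Finset.mem_univ _, ?_⟩
      refine Eq.trans ?_ hs.2
      apply congrArg Finset.card
      ext i
      simp
    · ext i
      simp

lemma bridge_rec (m : ℕ) (hm : 1 ≤ m) :
    bcount m = ∑ r ∈ Finset.Icc 1 m, 2 * fcount r * bcount (m - r) := by
  unfold bcount
  rw [card_filter_fz m _ (fun ω hQ => ⟨2 * m, by omega, le_rfl, hQ⟩)]
  apply Finset.sum_congr rfl
  intro r hr
  rw [Finset.mem_Icc] at hr
  rw [card_fiber_split hr.1 hr.2 _ (fun _ => True)
    (fun w => S (2 * (m - r)) w (2 * (m - r)) = 0) ?_]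
  · have h1 : ∀ e ∈ (Finset.univ : Finset (Fin (2 * r) → Bool)),
        ((FR (2 * r) e ∧ True) ↔ FR (2 * r) e) := by simp
    rw [Finset.filter_congr h1, card_FR r (by omega), mul_assoc]
  · intro e w hFR
    have h : 2 * m = 2 * r + 2 * (m - r) := by omega
    show S (2 * m) (fun i => Fin.append e w (Fin.cast h i)) (2 * m) = 0
      ↔ True ∧ S (2 * (m - r)) w (2 * (m - r)) = 0
    rw [S_cast' h (Fin.append e w) (2 * m),
      S_append_ge e w (show 2 * r ≤ 2 * m by omega), hFR.1,
      show 2 * m - 2 * r = 2 * (m - r) by omega]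
    simp

noncomputable def sncount (m : ℕ) : ℕ :=
  (Finset.univ.filter fun ω : Fin (2 * m) → Bool =>
    ∀ j, 0 < j → j ≤ 2 * m → S (2 * m) ω j < 0).card

lemma S_one_val {e : Fin 1 → Bool} : S 1 e 1 = if e 0 then 1 else -1 := by
  have h := S_succ 1 e 0
  rw [S_zero, zero_add] at h
  rw [show S 1 e 1 = S 1 e (0 + 1) from rfl, h, stepc, dif_pos one_pos, zero_add]
  rfl

lemma card_e0_false : (Finset.univ.filter fun e : Fin 1 → Bool => e 0 = false).card = 1 := by
  rw [Finset.card_eq_one]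
  refine ⟨fun _ => false, ?_⟩
  ext e
  simp only [Finset.mem_filter, Finset.mem_univ, true_and, Finset.mem_singleton]
  constructor
  · intro h
    funext i
    have : i = 0 := Subsingleton.elim _ _
    rw [this, h]
  · intro h
    rw [h]

lemma card_univ_fin1 (P : (Fin 1 → Bool) → Prop) [DecidablePred P] (hP : ∀ e, P e) :
    (Finset.univ.filter P).card = 2 := by
  rw [Finset.filter_true_of_mem fun e _ => hP e]
  simp [Finset.card_univ]

lemma npcount_even (m : ℕ) (hm : 1 ≤ m) : npcount (2 * m) = 2 * npcount (2 * m - 1) := by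
  have h : 2 * m = (2 * m - 1) + 1 := by omega
  rw [npcount]
  refine Eq.trans (card_filter_cast h _
    (fun ν => ∀ j, j ≤ 2 * m → S ((2 * m - 1) + 1) ν j ≤ 0) ?_) ?_
  · intro ω
    constructor
    · intro hQ j hj
      rw [S_cast h ω j]
      exact hQ j hj
    · intro hQ j hj
      rw [← S_cast h ω j]
      exact hQ j hj
  · refine Eq.trans (card_filter_split _
      (fun e : Fin (2 * m - 1) → Bool => ∀ j, j ≤ 2 * m - 1 → S (2 * m - 1) e j ≤ 0)
      (fun _ : Fin 1 → Bool => True) ?_) ?_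
    · intro e w
      constructor
      · intro hQ
        refine ⟨fun j hj => ?_, trivial⟩
        rw [← S_append_le e w hj]
        exact hQ j (by omega)
      · rintro ⟨hP1, -⟩ j hj
        rcases Nat.lt_or_ge j (2 * m) with hlt | hge
        · rw [S_append_le e w (by omega)]
          exact hP1 j (by omega)
        · have hj2 : j = 2 * m := by omega
          subst hj2
          rw [S_append_ge e w (by omega)]
          have h1 : S (2 * m - 1) e (2 * m - 1) ≤ 0 := hP1 _ le_rfl
          have h2 : S (2 * m - 1) e (2 * m - 1) ≠ 0 := by
            intro h0
            have := S_parity (2 * m - 1) e (2 * m - 1) le_rfl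
            rw [h0] at this
            rcases this with ⟨t, ht⟩
            have : (2 * m - 1 : ℕ) = 2 * m - 1 := rfl
            push_cast at ht
            omega
          have h3 := S_one w (by omega)
          rw [show 2 * m - (2 * m - 1) = 1 by omega]
          omega
    · rw [card_univ_fin1 _ (fun _ => trivial)]
      unfold npcount
      rw [mul_comm]

lemma sncount_eq (m : ℕ) (hm : 1 ≤ m) : sncount m = npcount (2 * m - 1) := by
  have h : 2 * m = 1 + (2 * m - 1) := by omega
  rw [sncount]
  refine Eq.trans (card_filter_cast h _
    (fun ν => ∀ j, 0 < j → j ≤ 2 * m → S (1 + (2 * m - 1)) ν j < 0) ?_) ?_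
  · intro ω
    constructor
    · intro hQ j hj hj2
      rw [S_cast h ω j]
      exact hQ j hj hj2
    · intro hQ j hj hj2
      rw [← S_cast h ω j]
      exact hQ j hj hj2
  · refine Eq.trans (card_filter_split _
      (fun e : Fin 1 → Bool => e 0 = false)
      (fun w : Fin (2 * m - 1) → Bool => ∀ j, j ≤ 2 * m - 1 → S (2 * m - 1) w j ≤ 0) ?_) ?_
    · intro e w
      constructor
      · intro hQ
        have h1 : S (1 + (2 * m - 1)) (Fin.append e w) 1 < 0 := hQ 1 one_pos (by omega)
        rw [S_append_le e w le_rfl, S_one_val] at h1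
        have he0 : e 0 = false := by
          by_contra hc
          rw [if_pos (by simpa using hc)] at h1
          omega
        refine ⟨he0, fun j hj => ?_⟩
        have h2 : S (1 + (2 * m - 1)) (Fin.append e w) (1 + j) < 0 :=
          hQ (1 + j) (by omega) (by omega)
        rw [S_append_ge e w (by omega), S_one_val, he0,
          show 1 + j - 1 = j by omega, if_neg (by simp)] at h2
        omega
      · rintro ⟨he0, hw⟩ j hj hj2
        rw [S_append_ge e w (by omega), S_one_val, he0, if_neg (by simp)]
        have := hw (j - 1) (by omega)
        omega
    · rw [card_e0_false, one_mul]
      unfold npcount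
      exact card_filter_ext fun e => Iff.rfl

lemma card_filter_and_not {α : Type*} [Fintype α] (p q : α → Prop)
    [DecidablePred p] [DecidablePred fun a => p a ∧ q a]
    [DecidablePred fun a => p a ∧ ¬ q a] :
    (Finset.univ.filter p).card
      = (Finset.univ.filter fun a => p a ∧ q a).card
        + (Finset.univ.filter fun a => p a ∧ ¬ q a).card := by
  classical
  have hU : Finset.univ.filter p
      = (Finset.univ.filter fun a => p a ∧ q a)
        ∪ (Finset.univ.filter fun a => p a ∧ ¬ q a) := by
    ext a
    simp only [Finset.mem_filter, Finset.mem_union, Finset.mem_univ, true_and]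
    tauto
  rw [hU, Finset.card_union_of_disjoint]
  rw [Finset.disjoint_left]
  intro a ha1 ha2
  rw [Finset.mem_filter] at ha1 ha2
  tauto

lemma np_rec (m : ℕ) (hm : 1 ≤ m) :
    npcount (2 * m) = sncount m
      + ∑ r ∈ Finset.Icc 1 m, fcount r * npcount (2 * (m - r)) := by
  unfold npcount
  rw [card_filter_and_not _ (fun ω => ∃ j, 0 < j ∧ j ≤ 2 * m ∧ S (2 * m) ω j = 0)]
  rw [Nat.add_comm]
  congr 1
  · -- strictly negative part
    unfold sncount
    refine card_filter_ext fun ω => ?_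
    constructor
    · rintro ⟨h1, h2⟩ j hj hj2
      push_neg at h2
      have := h2 j hj hj2
      have := h1 j hj2
      omega
    · intro hS
      refine ⟨fun j hj => ?_, ?_⟩
      · rcases Nat.eq_zero_or_pos j with rfl | hj0
        · rw [S_zero]
        · exact (hS j hj0 hj).le
      · push_neg
        intro j hj hj2
        exact (hS j hj hj2).ne
  · -- returning part
    rw [card_filter_fz m _ (fun ω hQ => hQ.2)]
    apply Finset.sum_congr rfl
    intro r hr
    rw [Finset.mem_Icc] at hr
    have hc : ∀ ω ∈ (Finset.univ : Finset (Fin (2 * m) → Bool)),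
        ((((∀ j, j ≤ 2 * m → S (2 * m) ω j ≤ 0)
            ∧ ∃ j, 0 < j ∧ j ≤ 2 * m ∧ S (2 * m) ω j = 0) ∧ fz (2 * m) ω = 2 * r)
          ↔ ((∀ j, j ≤ 2 * m → S (2 * m) ω j ≤ 0) ∧ fz (2 * m) ω = 2 * r)) := by
      intro ω _
      constructor
      · rintro ⟨⟨h1, -⟩, h2⟩
        exact ⟨h1, h2⟩
      · rintro ⟨h1, h2⟩
        have h0 := ((fz_eq_iff ω (by omega : 0 < 2 * r)).mp h2).1
        exact ⟨⟨h1, ⟨2 * r, by omega, by omega, h0⟩⟩, h2⟩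
    rw [Finset.filter_congr hc]
    rw [card_fiber_split hr.1 hr.2 _ (fun e => S (2 * r) e 1 < 0)
      (fun w => ∀ j, j ≤ 2 * (m - r) → S (2 * (m - r)) w j ≤ 0) ?_]
    · congr 1
      exact Eq.trans (card_filter_ext fun e => Iff.rfl) (card_FRneg r)
    · intro e w hFR
      have h : 2 * m = 2 * r + 2 * (m - r) := by omega
      show (∀ j, j ≤ 2 * m → S (2 * m) (fun i => Fin.append e w (Fin.cast h i)) j ≤ 0)
        ↔ S (2 * r) e 1 < 0 ∧ (∀ j, j ≤ 2 * (m - r) → S (2 * (m - r)) w j ≤ 0)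
      constructor
      · intro hQ
        constructor
        · have h1 := hQ 1 (by omega)
          rw [S_cast' h, S_append_le e w (by omega)] at h1
          have h2 := hFR.2 1 (by omega) one_pos
          omega
        · intro j hj
          have h1 := hQ (2 * r + j) (by omega)
          rw [S_cast' h, S_append_ge e w (by omega), hFR.1,
            show 2 * r + j - 2 * r = j by omega] at h1
          omega
      · rintro ⟨he1, hw⟩ j hj
        rw [S_cast' h]
        rcases le_or_gt j (2 * r) with hle | hlt
        · rw [S_append_le e w hle]
          rcases Nat.eq_zero_or_pos j with rfl | hj0
          · rw [S_zero]
          rcases Nat.lt_or_ge j (2 * r) with hj1 | hj1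
          · exact (neg_persist e le_rfl he1
              (fun i hi hiL => hFR.2 i hiL hi) j hj0 (by omega)).1
          · have hj2 : j = 2 * r := by omega
            subst hj2
            rw [hFR.1]
        · rw [S_append_ge e w (by omega), hFR.1]
          have := hw (j - 2 * r) (by omega)
          omega

lemma npcount_zero : npcount 0 = 1 := by
  unfold npcount
  rw [Finset.filter_true_of_mem]
  · simp [Finset.card_univ]
  · intro ω _ j hj
    have : j = 0 := by omega
    subst this
    rw [S_zero]

lemma np_eq (m : ℕ) : npcount (2 * m) = (2 * m).choose m := by
  induction m using Nat.strong_induction_on with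
  | _ m ih =>
    rcases Nat.eq_zero_or_pos m with rfl | hm
    · simpa using npcount_zero
    · have h1 := npcount_even m hm
      have h2 := np_rec m hm
      have h3 := sncount_eq m hm
      have h4 := bridge_rec m hm
      rw [Finset.sum_congr rfl (fun r hr => by
        rw [Finset.mem_Icc] at hr
        rw [ih (m - r) (by omega)] :
          ∀ r ∈ Finset.Icc 1 m, fcount r * npcount (2 * (m - r))
            = fcount r * (2 * (m - r)).choose (m - r))] at h2
      rw [bcount_eq, Finset.sum_congr rfl (fun r hr => by
        rw [bcount_eq, mul_assoc] :
          ∀ r ∈ Finset.Icc 1 m, 2 * fcount r * bcount (m - r)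
            = 2 * (fcount r * (2 * (m - r)).choose (m - r))), ← Finset.mul_sum] at h4
      omega

lemma posTime_all_pos {n : ℕ} (ω : Fin n → Bool) (h1 : 0 < S n ω 1)
    (hz : ∀ j, 0 < j → j ≤ n → S n ω j ≠ 0) : posTime n ω = n := by
  have hper := pos_persist ω le_rfl h1 (fun i hi hiL => hz i hi (by omega))
  have hstrict : ∀ j, 0 < j → j ≤ n → 0 < S n ω j := by
    intro j hj hjn
    have h := hper j hj hjn
    have := hz j hj hjn
    omega
  rw [posTime, Finset.filter_true_of_mem, Nat.card_Icc]
  · omega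
  · intro j hj
    rw [Finset.mem_Icc] at hj
    rcases Nat.lt_or_ge 1 j with hgt | hle
    · exact Or.inl (hstrict (j - 1) (by omega) (by omega))
    · right
      have : j = 1 := by omega
      subst this
      exact h1
lemma posTime_all_neg {n : ℕ} (ω : Fin n → Bool) (h1 : S n ω 1 < 0)
    (hz : ∀ j, 0 < j → j ≤ n → S n ω j ≠ 0) : posTime n ω = 0 := by
  rw [posTime_zero_iff]
  intro j hj
  rcases Nat.eq_zero_or_pos j with rfl | hj0
  · rw [S_zero]
  · exact (neg_persist ω le_rfl h1 (fun i hi hiL => hz i hi (by omega)) j hj0 hj).1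

lemma acount_overflow (m k : ℕ) (h : m < k) : acount m k = 0 := by
  unfold acount
  rw [Finset.card_eq_zero, Finset.filter_eq_empty_iff]
  intro ω _ hpt
  have := posTime_le (2 * m) ω
  omega

lemma acount_symm (n : ℕ) : acount n n = acount n 0 := by
  unfold acount
  apply Finset.card_nbij (fun ω => fun i => !(ω i))
  · intro ω hω
    rw [Finset.mem_coe, Finset.mem_filter] at hω ⊢
    refine ⟨Finset.mem_univ _, ?_⟩
    rw [posTime_neg, hω.2]
    omega
  · intro e _ e' _ hee
    funext i
    have := congrFun hee i
    simpa using this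
  · intro ω' hω'
    rw [Finset.mem_coe, Finset.mem_filter] at hω'
    refine ⟨fun i => !(ω' i), ?_, ?_⟩
    · rw [Finset.mem_coe, Finset.mem_filter]
      refine ⟨Finset.mem_univ _, ?_⟩
      have hpt := posTime_neg (2 * n) (fun i => !(ω' i))
      have he : (fun i => !(!(ω' i))) = ω' := by funext i; simp
      rw [he] at hpt
      have h2 := posTime_neg (2 * n) ω'
      rw [hω'.2] at h2
      have h3 := posTime_le (2 * n) (fun i => !(ω' i))
      omega
    · funext i; simp

lemma acount_zero (n : ℕ) : acount n 0 = npcount (2 * n) := by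
  unfold acount npcount
  refine card_filter_ext fun ω => ?_
  rw [Nat.mul_zero]
  exact posTime_zero_iff (2 * n) ω

lemma acount_rec (n k : ℕ) (hk0 : 0 < k) (hkn : k < n) :
    acount n k
      = (∑ r ∈ Finset.Icc 1 n, fcount r *
          (if r ≤ k then acount (n - r) (k - r) else 0))
        + ∑ r ∈ Finset.Icc 1 n, fcount r * acount (n - r) k := by
  unfold acount
  rw [card_filter_and_not _ (fun ω => 0 < S (2 * n) ω 1)]
  congr 1
  · -- positive-start part
    rw [card_filter_fz n _ ?_]
    swap
    · intro ω hQ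
      by_contra hz
      push_neg at hz
      have := posTime_all_pos ω hQ.2 (fun j hj hjn hS => hz j hj hjn hS)
      rw [hQ.1] at this
      omega
    apply Finset.sum_congr rfl
    intro r hr
    rw [Finset.mem_Icc] at hr
    rw [card_fiber_split hr.1 hr.2 _ (fun e => 0 < S (2 * r) e 1)
      (fun w => 2 * r + posTime (2 * (n - r)) w = 2 * k) ?_]
    · congr 1
      rcases le_or_gt r k with hle | hlt
      · rw [if_pos hle]
        refine card_filter_ext fun w => ?_
        constructor
        · intro hw; omega
        · intro hw; omega
      · rw [if_neg (by omega)]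
        rw [Finset.card_eq_zero, Finset.filter_eq_empty_iff]
        intro w _ hw
        omega
    · intro e w hFR
      have h : 2 * n = 2 * r + 2 * (n - r) := by omega
      show (posTime (2 * n) (fun i => Fin.append e w (Fin.cast h i)) = 2 * k
          ∧ 0 < S (2 * n) (fun i => Fin.append e w (Fin.cast h i)) 1)
        ↔ 0 < S (2 * r) e 1 ∧ 2 * r + posTime (2 * (n - r)) w = 2 * k
      rw [posTime_cast' h, posTime_append e w hFR.1, S_cast' h,
        S_append_le e w (by omega)]
      constructor
      · rintro ⟨hpt, hsgn⟩
        rw [posTime_FR_pos hFR hsgn] at hpt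
        exact ⟨hsgn, hpt⟩
      · rintro ⟨hsgn, hpt⟩
        rw [posTime_FR_pos hFR hsgn]
        exact ⟨hpt, hsgn⟩
  · -- negative-start part
    rw [card_filter_fz n _ ?_]
    swap
    · intro ω hQ
      by_contra hz
      push_neg at hz
      have hneg : S (2 * n) ω 1 < 0 := by
        rcases S_one ω (by omega) with h | h
        · exfalso; apply hQ.2; omega
        · omega
      have := posTime_all_neg ω hneg (fun j hj hjn hS => hz j hj hjn hS)
      rw [hQ.1] at this
      omega
    apply Finset.sum_congr rfl
    intro r hr
    rw [Finset.mem_Icc] at hr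
    rw [card_fiber_split hr.1 hr.2 _ (fun e => S (2 * r) e 1 < 0)
      (fun w => posTime (2 * (n - r)) w = 2 * k) ?_]
    · congr 1
      exact Eq.trans (card_filter_ext fun e => Iff.rfl) (card_FRneg r)
    · intro e w hFR
      have h : 2 * n = 2 * r + 2 * (n - r) := by omega
      show (posTime (2 * n) (fun i => Fin.append e w (Fin.cast h i)) = 2 * k
          ∧ ¬ 0 < S (2 * n) (fun i => Fin.append e w (Fin.cast h i)) 1)
        ↔ S (2 * r) e 1 < 0 ∧ posTime (2 * (n - r)) w = 2 * k
      rw [posTime_cast' h, posTime_append e w hFR.1, S_cast' h,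
        S_append_le e w (by omega)]
      have hne : S (2 * r) e 1 ≠ 0 := hFR.2 1 (by omega) one_pos
      constructor
      · rintro ⟨hpt, hsgn⟩
        have hneg : S (2 * r) e 1 < 0 := by omega
        rw [posTime_FR_neg hFR hneg] at hpt
        rw [zero_add] at hpt
        exact ⟨hneg, hpt⟩
      · rintro ⟨hsgn, hpt⟩
        rw [posTime_FR_neg hFR hsgn, zero_add]
        exact ⟨hpt, by omega⟩

lemma acount_eq (n : ℕ) : ∀ k, k ≤ n →
    acount n k = (2 * k).choose k * (2 * (n - k)).choose (n - k) := by
  induction n using Nat.strong_induction_on with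
  | _ n ih =>
    intro k hk
    rcases Nat.eq_zero_or_pos k with rfl | hk0
    · rw [acount_zero, np_eq]
      simp
    rcases eq_or_lt_of_le hk with rfl | hkn
    · rw [acount_symm, acount_zero, np_eq]
      simp
    have hrec := acount_rec n k hk0 hkn
    have hA : ∑ r ∈ Finset.Icc 1 n, fcount r * (if r ≤ k then acount (n - r) (k - r) else 0)
        = (∑ r ∈ Finset.Icc 1 k, fcount r * (2 * (k - r)).choose (k - r))
            * (2 * (n - k)).choose (n - k) := by
      rw [Finset.sum_mul]
      rw [← Finset.sum_subset (Finset.Icc_subset_Icc_right (by omega : k ≤ n))]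
      · apply Finset.sum_congr rfl
        intro r hr
        rw [Finset.mem_Icc] at hr
        rw [if_pos hr.2, ih (n - r) (by omega) (k - r) (by omega),
          show (n - r) - (k - r) = n - k by omega]
        ring
      · intro r hrn hrk
        rw [Finset.mem_Icc] at hrn
        rw [Finset.mem_Icc] at hrk
        rw [if_neg (by omega)]
        ring
    have hB : ∑ r ∈ Finset.Icc 1 n, fcount r * acount (n - r) k
        = (2 * k).choose k
            * ∑ r ∈ Finset.Icc 1 (n - k), fcount r * (2 * (n - k - r)).choose (n - k - r) := by
      rw [Finset.mul_sum]
      rw [← Finset.sum_subset (Finset.Icc_subset_Icc_right (by omega : n - k ≤ n))]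
      · apply Finset.sum_congr rfl
        intro r hr
        rw [Finset.mem_Icc] at hr
        rw [ih (n - r) (by omega) k (by omega),
          show (n - r) - k = n - k - r by omega]
        ring
      · intro r hrn hrk
        rw [Finset.mem_Icc] at hrn
        rw [Finset.mem_Icc] at hrk
        rw [acount_overflow (n - r) k (by omega)]
        ring
    have hbk : (2 * k).choose k
        = 2 * ∑ r ∈ Finset.Icc 1 k, fcount r * (2 * (k - r)).choose (k - r) := by
      have h := bridge_rec k hk0
      rw [bcount_eq, Finset.sum_congr rfl (fun r hr => by
        rw [bcount_eq, mul_assoc] :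
          ∀ r ∈ Finset.Icc 1 k, 2 * fcount r * bcount (k - r)
            = 2 * (fcount r * (2 * (k - r)).choose (k - r))), ← Finset.mul_sum] at h
      exact h
    have hbnk : (2 * (n - k)).choose (n - k)
        = 2 * ∑ r ∈ Finset.Icc 1 (n - k), fcount r * (2 * (n - k - r)).choose (n - k - r) := by
      have h := bridge_rec (n - k) (by omega)
      rw [bcount_eq, Finset.sum_congr rfl (fun r hr => by
        rw [bcount_eq, mul_assoc] :
          ∀ r ∈ Finset.Icc 1 (n - k), 2 * fcount r * bcount (n - k - r)
            = 2 * (fcount r * (2 * (n - k - r)).choose (n - k - r))), ← Finset.mul_sum] at h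
      exact h
    rw [hA, hB] at hrec
    rw [hbk, hbnk] at hrec ⊢
    rw [hrec]
    ring

theorem discrete_arcsine_law (n k : ℕ) (hk : k ≤ n) :
    ((Finset.univ.filter fun ω : Fin (2 * n) → Bool =>
        posTime (2 * n) ω = 2 * k).card : ℝ) / 4 ^ n =
      ((2 * k).choose k : ℝ) * ((2 * n - 2 * k).choose (n - k)) / 4 ^ n := by
  have h := acount_eq n k hk
  have h2 : (Finset.univ.filter fun ω : Fin (2 * n) → Bool =>
      posTime (2 * n) ω = 2 * k).card = (2 * k).choose k * ((2 * n - 2 * k).choose (n - k)) := by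
    rw [show 2 * n - 2 * k = 2 * (n - k) by omega]
    exact h
  rw [h2]
  push_cast
  ring
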